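/- Let S be a string with labels ℓ, and for a string w let Occ(w) = {i : w occurs in S at position i}. Define S_w as the sequence of characters S[i + |w|] for i ∈ Occ(w) (taking a sentinel $ when i + |w| > |S|), where the positions i are listed sorted by ℓ(i). Then for any character c and string α, the subsequence of S_w consisting of its occurrences of c, with each such character S[i+|w|] = c replaced by S[i + |w| + |c·α|], equals S_{w·c·α}, provided every occurrence of w·c in S extends to an occurrence of w·c·α. -/

import Mathlib

def occursAt {α : Type*} (S P : List α) (i : ℕ) : Prop := P <+: S.drop i

instance {α : Type*} [DecidableEq α] (S P : List α) (i : ℕ) : Decidable (occursAt S P i) :=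
  inferInstanceAs (Decidable (P <+: S.drop i))

/-- The starting positions of occurrences of `w` in `S`, stably sorted by label. -/
def sortedOcc {α : Type*} [DecidableEq α] (S : List α) (ℓ : ℕ → ℕ) (w : List α) : List ℕ :=
  ((List.range S.length).filter (fun i => decide (occursAt S w i))).mergeSort
    (fun i j => decide (ℓ i < ℓ j ∨ (ℓ i = ℓ j ∧ i ≤ j)))

/-- `S_w`: the characters following occurrences of `w` in `S` (the sentinel `d` when the
occurrence reaches the end of `S`), listed sorted by the labels of those occurrences. -/
def Sw {α : Type*} [DecidableEq α] (S : List α) (ℓ : ℕ → ℕ) (d : α) (w : List α) : List α :=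
  (sortedOcc S ℓ w).map (fun i => S.getD (i + w.length) d)

lemma occ_key {α : Type*} (S : List α) (d : α) (w : List α) (c : α) (t : List α)
    (hc : c ≠ d)
    (hext : ∀ i, occursAt S (w ++ [c]) i → occursAt S (w ++ c :: t) i) (i : ℕ) :
    occursAt S (w ++ c :: t) i ↔ (occursAt S w i ∧ S.getD (i + w.length) d = c) := by
  have hgetD : S.getD (i + w.length) d = (S.drop i).getD w.length d := by
    simp [List.getD, List.getElem?_drop]
  constructor
  · rintro ⟨r, hr⟩
    constructor
    · exact ⟨c :: t ++ r, by simpa using hr⟩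
    · rw [hgetD, ← hr]
      simp [List.getD, List.getElem?_append_right, List.getElem_append_right]
  · rintro ⟨⟨r, hr⟩, hch⟩
    rw [hgetD, ← hr] at hch
    simp [List.getD, List.getElem?_append_right] at hch
    match r, hch with
    | [], hch => exact absurd hch.symm hc
    | x :: r', hch =>
      have hx : x = c := by simpa using hch
      subst hx
      exact hext i ⟨r', by simpa using hr⟩

theorem stmt5 {α : Type*} [DecidableEq α] (S : List α) (ℓ : ℕ → ℕ) (d : α)
    (w : List α) (c : α) (t : List α) (hc : c ≠ d)
    (hext : ∀ i, occursAt S (w ++ [c]) i → occursAt S (w ++ c :: t) i) :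
    ((sortedOcc S ℓ w).filter (fun i => decide (S.getD (i + w.length) d = c))).map
        (fun i => S.getD (i + (w ++ c :: t).length) d)
      = Sw S ℓ d (w ++ c :: t) := by
  have hfil : (sortedOcc S ℓ w).filter (fun i => decide (S.getD (i + w.length) d = c))
      = sortedOcc S ℓ (w ++ c :: t) := by
    set le : ℕ → ℕ → Bool := fun i j => decide (ℓ i < ℓ j ∨ (ℓ i = ℓ j ∧ i ≤ j)) with hle
    have htrans : ∀ a b c' : ℕ, le a b → le b c' → le a c' := by
      intro a b c' h1 h2; simp [hle] at *; omega
    have htotal : ∀ a b : ℕ, le a b || le b a := by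
      intro a b; simp [hle]; omega
    haveI : IsAntisymm ℕ (fun i j => le i j = true) :=
      ⟨by intro a b h1 h2; simp [hle] at h1 h2; omega⟩
    refine (fun hp h1 h2 => List.Perm.eq_of_pairwise' (r := fun i j => le i j = true) h1 h2 hp) ?_ ?_ ?_
    · refine ((List.mergeSort_perm _ _).filter _).trans ?_
      rw [List.filter_filter]
      have : (List.range S.length).filter
          (fun i => decide (S.getD (i + w.length) d = c) && decide (occursAt S w i))
          = (List.range S.length).filter (fun i => decide (occursAt S (w ++ c :: t) i)) := by
        apply List.filter_congr
        intro i _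
        simp only [Bool.and_eq_true, decide_eq_true_eq, ← Bool.decide_and]
        congr 1
        simp only [eq_iff_iff]
        rw [occ_key S d w c t hc hext i]
        exact and_comm
      rw [this]
      exact (List.mergeSort_perm _ _).symm
    · exact List.Pairwise.filter _ (List.pairwise_mergeSort htrans htotal _)
    · exact List.pairwise_mergeSort htrans htotal _
  rw [hfil]; rfl
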